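/- (Δ-operation soundness) Let G be a finite graph with model E₃^T and let x, y, z form a triangle. Condition on the coloring pattern of the triangle: (A₁) xy differs in color from xz and yz; (A₂) xz differs from xy and yz; (A₃) yz differs from xy and xz; (A₄) all three edges have the same color. In case Aᵢ (i = 1,2,3) the connection probabilities P(u₀ → v_j) in G equal those in the graph obtained by contracting the 'odd' edge and deleting one of the resulting parallel edges; in case A₄ they equal those of the hypergraph model where the three triangle edges are constrained to share one uniformly random color. Consequently P_G(u₀→v_j) = (1/4)[P_{G₁}(u₀→v_j) + P_{G₂}(u₀→v_j) + P_{G₃}(u₀→v_j) + P_{G₄}(u₀→v_j)]. -/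

import Mathlib

open scoped Classical

noncomputable section

/-- Indicator of a proposition, as a real number. -/
def pInd (P : Prop) : ℝ := if P then 1 else 0

/-- A finite multigraph without loops on vertex set `V`. -/
structure Multigraph (V : Type) where
  E : Type
  fintypeE : Fintype E
  decEqE : DecidableEq E
  ends : E → Sym2 V
  not_isDiag : ∀ e, ¬ (ends e).IsDiag

attribute [instance] Multigraph.fintypeE Multigraph.decEqE

variable {V : Type}

/-- Colored presence graph of model E₃ on a multigraph: the copy of edge `e` lives in
the layer given by its color `c e`; vertical edges at `T`. -/
def Multigraph.ccGraph (M : Multigraph V) (c : M.E → Bool) (T : Set V) :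
    SimpleGraph (V × Bool) where
  Adj a b := (a.2 = b.2 ∧ ∃ e, M.ends e = s(a.1, b.1) ∧ c e = a.2) ∨
    (a.1 = b.1 ∧ a.2 ≠ b.2 ∧ a.1 ∈ T)
  symm := by
    constructor
    intro a b h
    rcases h with ⟨h1, e, he, hc⟩ | ⟨h1, h2, h3⟩
    · exact Or.inl ⟨h1.symm, e, by rwa [Sym2.eq_swap], by rwa [← h1]⟩
    · exact Or.inr ⟨h1.symm, Ne.symm h2, h1 ▸ h3⟩
  loopless := by
    constructor
    rintro a (⟨h1, e, he, hc⟩ | ⟨h1, h2, h3⟩)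
    · exact M.not_isDiag e (by rw [he]; exact Sym2.mk_isDiag_iff.mpr rfl)
    · exact h2 rfl

/-- Connection probability in model E₃^T on a multigraph. -/
def PE3M (M : Multigraph V) (T : Set V) (x y : V × Bool) : ℝ :=
  (∑ c : M.E → Bool, pInd ((M.ccGraph c T).Reachable x y)) / 2 ^ Fintype.card M.E

/-- Restriction of a multigraph to the edges satisfying `P` (edge deletion). -/
def Multigraph.restrict (M : Multigraph V) (P : M.E → Prop) : Multigraph V where
  E := {e : M.E // P e}
  fintypeE := Subtype.fintype _
  decEqE := inferInstance
  ends e := M.ends e.1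
  not_isDiag e := M.not_isDiag e.1

/-- Contraction of the vertex `x` into the vertex `y`: every edge endpoint equal to `x`
is renamed `y`, and the edges that become loops are removed. -/
def Multigraph.contract [DecidableEq V] (M : Multigraph V) (x y : V) : Multigraph V where
  E := {e : M.E // ¬ (Sym2.map (fun w => if w = x then y else w) (M.ends e)).IsDiag}
  fintypeE := Subtype.fintype _
  decEqE := inferInstance
  ends e := Sym2.map (fun w => if w = x then y else w) (M.ends e.1)
  not_isDiag e := e.2


/-- The coloring of the edges of `M` in which the three edges `e₁, e₂, e₃` of a
triangle are constrained to share one common color (model E₄ with the block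
`{e₁,e₂,e₃}` and singletons elsewhere). -/
def triColor (M : Multigraph V) (e₁ e₂ e₃ : M.E)
    (γ : ({e : M.E // e ≠ e₁ ∧ e ≠ e₂ ∧ e ≠ e₃} ⊕ Unit) → Bool) : M.E → Bool :=
  fun e =>
    if h : e = e₁ ∨ e = e₂ ∨ e = e₃ then γ (Sum.inr ())
    else γ (Sum.inl ⟨e, by push_neg at h; exact h⟩)

/-- Connection probability in the hypergraph model E₄ where the triangle edges
`e₁, e₂, e₃` form a single block (one uniform color) and all other edges are
independently uniformly colored. -/
def PE4tri (M : Multigraph V) (e₁ e₂ e₃ : M.E) (T : Set V) (x y : V × Bool) : ℝ :=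
  (∑ γ : ({e : M.E // e ≠ e₁ ∧ e ≠ e₂ ∧ e ≠ e₃} ⊕ Unit) → Bool,
      pInd ((M.ccGraph (triColor M e₁ e₂ e₃ γ) T).Reachable x y)) /
    2 ^ Fintype.card (({e : M.E // e ≠ e₁ ∧ e ≠ e₂ ∧ e ≠ e₃} ⊕ Unit))

lemma sum_comp_inj {α β : Type*} [Fintype α] [Fintype β] [DecidableEq α] [DecidableEq β] (ι : α → β)
    (hι : Function.Injective ι) (G : (α → Bool) → ℝ) :
    ∑ d : β → Bool, G (d ∘ ι) =
      2 ^ (Fintype.card β - Fintype.card α) * ∑ g : α → Bool, G g := by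
  classical
  let K := {b : β // ¬ ∃ a, ι a = b}
  let F : ((α → Bool) × (K → Bool)) → (β → Bool) := fun gh b =>
    if hb : ∃ a, ι a = b then gh.1 hb.choose else gh.2 ⟨b, hb⟩
  have hcomp : ∀ gh, F gh ∘ ι = gh.1 := by
    intro gh
    funext a
    have hex : ∃ a', ι a' = ι a := ⟨a, rfl⟩
    simp only [Function.comp, F, dif_pos hex]
    exact congrArg gh.1 (hι hex.choose_spec)
  have hbij : Function.Bijective F := by
    constructor
    · intro gh gh' h
      have h1 : gh.1 = gh'.1 := by rw [← hcomp gh, ← hcomp gh', h]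
      have h2 : gh.2 = gh'.2 := by
        funext k
        have := congrFun h k.1
        simpa only [F, dif_neg k.2] using this
      exact Prod.ext h1 h2
    · intro d
      refine ⟨(fun a => d (ι a), fun k => d k.1), ?_⟩
      funext b
      by_cases hb : ∃ a, ι a = b
      · simp only [F, dif_pos hb]
        rw [hb.choose_spec]
      · simp only [F, dif_neg hb]
  have hsum : ∑ d : β → Bool, G (d ∘ ι) = ∑ gh : (α → Bool) × (K → Bool), G (F gh ∘ ι) :=
    (Fintype.sum_bijective F hbij _ _ (fun gh => rfl)).symm
  rw [hsum]
  have : ∀ gh : (α → Bool) × (K → Bool), G (F gh ∘ ι) = G gh.1 := by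
    intro gh; rw [hcomp]
  rw [Fintype.sum_congr _ _ this, Fintype.sum_prod_type_right]
  simp only []
  rw [Finset.sum_const, Finset.card_univ]
  have hcardK : Fintype.card K = Fintype.card β - Fintype.card α := by
    have h1 : Fintype.card {b : β // ∃ a, ι a = b} = Fintype.card α := by
      rw [Fintype.card_subtype]
      have himg : Finset.univ.filter (fun b => ∃ a, ι a = b) = Finset.univ.image ι := by
        ext b
        simp [eq_comm]
      rw [himg, Finset.card_image_of_injective _ hι, Finset.card_univ]
    have := Fintype.card_subtype_compl (fun b : β => ∃ a, ι a = b)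
    rw [h1] at this
    simpa [K] using this
  rw [nsmul_eq_mul, Fintype.card_fun, hcardK]
  push_cast
  simp

lemma reach_iff [DecidableEq V] (M : Multigraph V) (T : Set V) {p q w : V}
    (hpq : p ≠ q) (hpw : p ≠ w) (hqw : q ≠ w)
    {o d r : M.E} (ho : M.ends o = s(p, q)) (hd : M.ends d = s(p, w))
    (hr : M.ends r = s(q, w))
    {c : M.E → Bool} (hc : c o ≠ c d ∧ c d = c r) (a b : V × Bool) :
    (M.ccGraph c T).Reachable a b ↔
      (((M.contract p q).restrict (fun e => e.1 ≠ d)).ccGraph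
        (fun e => c e.1.1) ((fun w => if w = p then q else w) '' T)).Reachable
        ((fun w => if w = p then q else w) a.1, a.2)
        ((fun w => if w = p then q else w) b.1, b.2) := by
  set f : V → V := fun w => if w = p then q else w with hf
  have hfp : f p = q := if_pos rfl
  have hfq : f q = q := ite_self q
  have hfw : f w = w := if_neg hpw.symm
  set M' := (M.contract p q).restrict (fun e => e.1 ≠ d) with hM'
  set c' : M'.E → Bool := fun e => c e.1.1 with hc'
  set T' : Set V := f '' T with hT'
  set G := M.ccGraph c T with hG
  set G' := M'.ccGraph c' T' with hG'
  have hrd : r ≠ d := by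
    intro h
    rw [h, hd] at hr
    rw [Sym2.eq_iff] at hr
    rcases hr with ⟨h1, _⟩ | ⟨h1, h2⟩
    · exact hpq h1
    · exact hpw h1
  -- adjacency constructors
  have hAdjH : ∀ (s t : V) (i : Bool) (e : M.E), M.ends e = s(s, t) → c e = i →
      G.Adj (s, i) (t, i) := fun s t i e he hce => Or.inl ⟨rfl, e, he, hce⟩
  have hkey : ∀ col, G.Reachable (p, col) (q, col) := by
    intro col
    by_cases h : col = c o
    · exact (hAdjH p q col o ho h.symm).reachable
    · have hcol : col = c d := by
        rcases hc with ⟨h1, _⟩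
        revert h h1; cases c o <;> cases c d <;> cases col <;> simp
      have h1 : G.Adj (p, col) (w, col) := hAdjH p w col d hd hcol.symm
      have h2 : G.Adj (w, col) (q, col) := by
        refine hAdjH w q col r ?_ ?_
        · rw [hr, Sym2.eq_swap]
        · rw [← hc.2, ← hcol]
      exact h1.reachable.trans h2.reachable
  have hfr : ∀ (s : V) (col : Bool), G.Reachable (s, col) (f s, col) := by
    intro s col
    by_cases hs : s = p
    · subst hs; rw [hfp]; exact hkey col
    · rw [show f s = s from if_neg hs]
  -- the image of r in M'
  have hndr : ¬ (Sym2.map f (M.ends r)).IsDiag := by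
    rw [hr, Sym2.map_pair_eq, hfq, hfw]
    simp [hqw]
  have hr' : ∃ e' : M'.E, M'.ends e' = s(q, w) ∧ c' e' = c r :=
    ⟨⟨⟨r, hndr⟩, hrd⟩, by
      show Sym2.map f (M.ends r) = s(q, w)
      rw [hr, Sym2.map_pair_eq, hfq, hfw], rfl⟩
  constructor
  · -- forward
    intro h
    have fwd : ∀ a b : V × Bool, G.Adj a b → G'.Reachable (f a.1, a.2) (f b.1, b.2) := by
      rintro ⟨s, i⟩ ⟨t, k⟩ (⟨hik, e, he, hce⟩ | ⟨hst, hik, hT⟩)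
      · dsimp only at hik hce ⊢
        subst hik
        by_cases hed : e = d
        · subst hed
          obtain ⟨r', hr'e, hr'c⟩ := hr'
          rw [hd] at he
          rw [Sym2.eq_iff] at he
          have hcr : c' r' = i := by rw [hr'c, ← hc.2, hce]
          rcases he with ⟨h1, h2⟩ | ⟨h1, h2⟩
          · subst h1; subst h2
            rw [hfp, hfw]
            exact (SimpleGraph.Adj.reachable (Or.inl ⟨rfl, r', hr'e, hcr⟩))
          · subst h1; subst h2
            rw [hfp, hfw]
            refine (SimpleGraph.Adj.reachable (Or.inl ⟨rfl, r', ?_, hcr⟩))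
            rw [hr'e, Sym2.eq_swap]
        · by_cases hdiag : (Sym2.map f (M.ends e)).IsDiag
          · have hft : f s = f t := by
              rw [he, Sym2.map_pair_eq] at hdiag
              simpa using hdiag
            rw [hft]
          · refine SimpleGraph.Adj.reachable (Or.inl ⟨rfl, ⟨⟨e, hdiag⟩, hed⟩, ?_, hce⟩)
            show Sym2.map f (M.ends e) = s(f s, f t)
            rw [he, Sym2.map_pair_eq]
      · dsimp only at hst hik hT ⊢
        subst hst
        exact SimpleGraph.Adj.reachable (Or.inr ⟨rfl, hik, Set.mem_image_of_mem f hT⟩)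
    obtain ⟨wk⟩ := h
    induction wk with
    | nil => exact SimpleGraph.Reachable.refl _
    | cons h _ ih => exact (fwd _ _ h).trans ih
  · -- backward
    intro h
    have bwd : ∀ a b : V × Bool, G'.Adj a b → G.Reachable a b := by
      rintro ⟨s, i⟩ ⟨t, k⟩ (⟨hik, e', he', hce'⟩ | ⟨hst, hik, hT⟩)
      · dsimp only at hik hce' ⊢
        subst hik
        set e := e'.1.1 with he_def
        obtain ⟨⟨s₀, t₀⟩, hpp⟩ := Quot.exists_rep (M.ends e)
        have hends : M.ends e = s(s₀, t₀) := hpp.symm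
        have hmap : s(f s₀, f t₀) = s(s, t) := by
          rw [← Sym2.map_pair_eq f, ← hends]
          exact he'
        have hadj : G.Adj (s₀, i) (t₀, i) := hAdjH s₀ t₀ i e hends hce'
        rw [Sym2.eq_iff] at hmap
        rcases hmap with ⟨h1, h2⟩ | ⟨h1, h2⟩
        · subst h1; subst h2
          exact ((hfr s₀ i).symm.trans hadj.reachable).trans (hfr t₀ i)
        · subst h1; subst h2
          exact ((hfr t₀ i).symm.trans hadj.reachable.symm).trans (hfr s₀ i)
      · dsimp only at hst hik hT ⊢
        subst hst
        obtain ⟨t₀, ht₀T, hft₀⟩ := hT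
        subst hft₀
        have hadj : G.Adj (t₀, i) (t₀, k) := Or.inr ⟨rfl, hik, ht₀T⟩
        exact ((hfr t₀ i).symm.trans hadj.reachable).trans (hfr t₀ k)
    have bwdR : ∀ X Y : V × Bool, G'.Reachable X Y → G.Reachable X Y := by
      intro X Y hR
      obtain ⟨wk⟩ := hR
      induction wk with
      | nil => exact SimpleGraph.Reachable.refl _
      | cons hadj _ ih => exact (bwd _ _ hadj).trans ih
    exact (hfr a.1 a.2).trans ((bwdR _ _ h).trans (hfr b.1 b.2).symm)

lemma card_ne_two {α : Type*} [Fintype α] [DecidableEq α] (o d : α) (hod : o ≠ d) :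
    Fintype.card {e : α // e ≠ o ∧ e ≠ d} = Fintype.card α - 2 := by
  rw [Fintype.card_subtype]
  have h : Finset.univ.filter (fun e => e ≠ o ∧ e ≠ d) = Finset.univ \ {o, d} := by
    ext e; simp [not_or]
  rw [h, Finset.card_sdiff_of_subset (by simp), Finset.card_univ]
  congr 1
  rw [Finset.card_insert_of_notMem (by simp [hod]), Finset.card_singleton]

lemma card_ne_three {α : Type*} [Fintype α] [DecidableEq α] (o d r : α)
    (hod : o ≠ d) (hor : o ≠ r) (hdr : d ≠ r) :
    Fintype.card {e : α // e ≠ o ∧ e ≠ d ∧ e ≠ r} = Fintype.card α - 3 := by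
  rw [Fintype.card_subtype]
  have h : Finset.univ.filter (fun e => e ≠ o ∧ e ≠ d ∧ e ≠ r) =
      Finset.univ \ {o, d, r} := by
    ext e; simp [not_or]
  rw [h, Finset.card_sdiff_of_subset (by simp), Finset.card_univ]
  congr 1
  rw [Finset.card_insert_of_notMem (by simp [hod, hor]),
    Finset.card_insert_of_notMem (by simp [hdr]), Finset.card_singleton]

lemma sum_cond (M : Multigraph V) (o d r : M.E) (hod : o ≠ d) (hro : r ≠ o)
    (hrd : r ≠ d) (g : (M.E → Bool) → ℝ) :
    (∑ c : M.E → Bool, if c o ≠ c d ∧ c d = c r then g c else 0) =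
      ∑ d₀ : {e : M.E // e ≠ o ∧ e ≠ d} → Bool,
        g (fun e => if h1 : e = o then !d₀ ⟨r, hro, hrd⟩
          else if h2 : e = d then d₀ ⟨r, hro, hrd⟩ else d₀ ⟨e, h1, h2⟩) := by
  classical
  set ext : ({e : M.E // e ≠ o ∧ e ≠ d} → Bool) → (M.E → Bool) := fun d₀ e =>
    if h1 : e = o then !d₀ ⟨r, hro, hrd⟩
    else if h2 : e = d then d₀ ⟨r, hro, hrd⟩ else d₀ ⟨e, h1, h2⟩ with hext
  have hji : ∀ c : M.E → Bool, (c o ≠ c d ∧ c d = c r) →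
      ext (fun e₀ => c e₀.1) = c := by
    intro c hc
    funext e
    show (if h1 : e = o then !c r else if h2 : e = d then c r else c e) = c e
    by_cases h1 : e = o
    · subst h1
      rw [dif_pos rfl]
      rcases hc with ⟨hne, heq⟩
      rw [← heq]
      revert hne; cases c d <;> cases c e <;> simp
    · by_cases h2 : e = d
      · subst h2
        rw [dif_neg h1, dif_pos rfl]
        exact hc.2.symm
      · rw [dif_neg h1, dif_neg h2]
  have hextval : ∀ d₀, (ext d₀ o = !d₀ ⟨r, hro, hrd⟩) ∧ (ext d₀ d = d₀ ⟨r, hro, hrd⟩) ∧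
      (ext d₀ r = d₀ ⟨r, hro, hrd⟩) := by
    intro d₀
    refine ⟨?_, ?_, ?_⟩
    · show (if h1 : o = o then _ else _) = _
      rw [dif_pos rfl]
    · show (if h1 : d = o then _ else if h2 : d = d then _ else _) = _
      rw [dif_neg hod.symm, dif_pos rfl]
    · show (if h1 : r = o then _ else if h2 : r = d then _ else _) = _
      rw [dif_neg hro, dif_neg hrd]
  rw [← Finset.sum_filter]
  refine Finset.sum_nbij' (i := fun c => fun e₀ => c e₀.1) (j := ext) ?_ ?_ ?_ ?_ ?_
  · intro c _; exact Finset.mem_univ _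
  · intro d₀ _
    simp only [Finset.mem_filter, Finset.mem_univ, true_and]
    obtain ⟨h1, h2, h3⟩ := hextval d₀
    rw [h1, h2, h3]
    refine ⟨?_, rfl⟩
    cases d₀ ⟨r, hro, hrd⟩ <;> simp
  · intro c hc
    simp only [Finset.mem_filter, Finset.mem_univ, true_and] at hc
    exact hji c hc
  · intro d₀ _
    funext e₀
    obtain ⟨e, h1, h2⟩ := e₀
    show (if h1 : e = o then _ else if h2 : e = d then _ else _) = _
    rw [dif_neg h1, dif_neg h2]
  · intro c hc
    simp only [Finset.mem_filter, Finset.mem_univ, true_and] at hc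
    exact (congrArg g (hji c hc)).symm

set_option maxHeartbeats 1000000 in
lemma case_eq [DecidableEq V] (M : Multigraph V) (T : Set V) {p q w : V}
    (hpq : p ≠ q) (hpw : p ≠ w) (hqw : q ≠ w)
    (o d r : M.E) (ho : M.ends o = s(p, q)) (hd : M.ends d = s(p, w))
    (hr : M.ends r = s(q, w)) (u v : V) (j : Bool) :
    (∑ c : M.E → Bool, if c o ≠ c d ∧ c d = c r then
        pInd ((M.ccGraph c T).Reachable (u, false) (v, j)) else 0) /
      2 ^ (Fintype.card M.E - 2) =
    PE3M ((M.contract p q).restrict (fun e => e.1 ≠ d))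
      ((fun w => if w = p then q else w) '' T)
      ((fun w => if w = p then q else w) u, false)
      ((fun w => if w = p then q else w) v, j) := by
  classical
  set f : V → V := fun w => if w = p then q else w with hf
  set M' := (M.contract p q).restrict (fun e => e.1 ≠ d) with hM'
  set Gfun : (M'.E → Bool) → ℝ := fun c' =>
    pInd ((M'.ccGraph c' (f '' T)).Reachable (f u, false) (f v, j)) with hGfun
  have hod : o ≠ d := by
    intro h; rw [h, hd, Sym2.eq_iff] at ho
    rcases ho with ⟨_, h2⟩ | ⟨h1, _⟩
    · exact hqw h2.symm
    · exact hpq h1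
  have hro : r ≠ o := by
    intro h; rw [h, ho, Sym2.eq_iff] at hr
    rcases hr with ⟨h1, _⟩ | ⟨h1, _⟩
    · exact hpq h1
    · exact hpw h1
  have hrd : r ≠ d := by
    intro h; rw [h, hd, Sym2.eq_iff] at hr
    rcases hr with ⟨h1, _⟩ | ⟨_, h2⟩
    · exact hpq h1
    · exact hqw h2.symm
  -- Step 1: replace the reachability in M by reachability in M'
  have step1 : (∑ c : M.E → Bool, if c o ≠ c d ∧ c d = c r then
        pInd ((M.ccGraph c T).Reachable (u, false) (v, j)) else 0) =
      (∑ c : M.E → Bool, if c o ≠ c d ∧ c d = c r then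
        Gfun (fun e => c e.1.1) else 0) := by
    refine Finset.sum_congr rfl ?_
    intro c _
    by_cases hcond : c o ≠ c d ∧ c d = c r
    · rw [if_pos hcond, if_pos hcond]
      exact congrArg pInd (propext
        (reach_iff M T hpq hpw hqw ho hd hr hcond (u, false) (v, j)))
    · rw [if_neg hcond, if_neg hcond]
  rw [step1, sum_cond M o d r hod hro hrd (fun c => Gfun (fun e => c e.1.1))]
  -- Step 3: the composed coloring is restriction along an injection
  have hdiag_o : (Sym2.map f (M.ends o)).IsDiag := by
    rw [ho, Sym2.map_pair_eq]
    have h1 : f p = q := if_pos rfl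
    have h2 : f q = q := ite_self q
    rw [h1, h2]
    exact Sym2.mk_isDiag_iff.mpr rfl
  set ι : M'.E → {e : M.E // e ≠ o ∧ e ≠ d} := fun e =>
    ⟨e.1.1, fun h => e.1.2 (h ▸ hdiag_o), e.2⟩ with hι
  have hιinj : Function.Injective ι := by
    intro e e' h
    rw [hι] at h
    simp only [Subtype.mk.injEq] at h
    exact Subtype.ext (Subtype.ext h)
  have step3 : ∀ d₀ : {e : M.E // e ≠ o ∧ e ≠ d} → Bool,
      (fun e : M'.E => (fun e' => if h1 : e' = o then !d₀ ⟨r, hro, hrd⟩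
          else if h2 : e' = d then d₀ ⟨r, hro, hrd⟩ else d₀ ⟨e', h1, h2⟩) e.1.1)
        = d₀ ∘ ι := by
    intro d₀
    funext e
    have h1 : e.1.1 ≠ o := fun h => e.1.2 (h ▸ hdiag_o)
    have h2 : e.1.1 ≠ d := e.2
    show (if h1 : e.1.1 = o then _ else if h2 : e.1.1 = d then _ else _) = _
    rw [dif_neg h1, dif_neg h2]
    simp only [hι, Function.comp_apply]
  have step4 : (∑ d₀ : {e : M.E // e ≠ o ∧ e ≠ d} → Bool, Gfun (d₀ ∘ ι)) =
      2 ^ (Fintype.card {e : M.E // e ≠ o ∧ e ≠ d} - Fintype.card M'.E) *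
        ∑ c' : M'.E → Bool, Gfun c' := sum_comp_inj ι hιinj Gfun
  have hsum_eq : (∑ d₀ : {e : M.E // e ≠ o ∧ e ≠ d} → Bool,
      Gfun ((fun e : M'.E => (fun e' => if h1 : e' = o then !d₀ ⟨r, hro, hrd⟩
          else if h2 : e' = d then d₀ ⟨r, hro, hrd⟩ else d₀ ⟨e', h1, h2⟩) e.1.1))) =
      2 ^ (Fintype.card {e : M.E // e ≠ o ∧ e ≠ d} - Fintype.card M'.E) *
        ∑ c' : M'.E → Bool, Gfun c' := by
    rw [← step4]
    exact Finset.sum_congr rfl (fun d₀ _ => congrArg Gfun (step3 d₀))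
  rw [hsum_eq]
  -- Step 5: arithmetic
  have hcard : Fintype.card {e : M.E // e ≠ o ∧ e ≠ d} = Fintype.card M.E - 2 :=
    card_ne_two o d hod
  have hm : Fintype.card M'.E ≤ Fintype.card M.E - 2 := by
    rw [← hcard]; exact Fintype.card_le_of_injective ι hιinj
  rw [hcard, PE3M]
  set S := ∑ c' : M'.E → Bool, Gfun c'
  set n2 := Fintype.card M.E - 2
  set m := Fintype.card M'.E
  have hpow : (2 : ℝ) ^ n2 = 2 ^ (n2 - m) * 2 ^ m := by
    rw [← pow_add, Nat.sub_add_cancel hm]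
  rw [hpow, mul_div_mul_left S ((2:ℝ) ^ m) (by positivity)]

set_option maxHeartbeats 1000000 in
lemma a4_eq (M : Multigraph V) (T : Set V) (e₁ e₂ e₃ : M.E)
    (h12 : e₁ ≠ e₂) (h13 : e₁ ≠ e₃) (h23 : e₂ ≠ e₃) (u v : V) (j : Bool) :
    (∑ c : M.E → Bool, if c e₁ = c e₂ ∧ c e₂ = c e₃ then
        pInd ((M.ccGraph c T).Reachable (u, false) (v, j)) else 0) /
      2 ^ (Fintype.card M.E - 2) = PE4tri M e₁ e₂ e₃ T (u, false) (v, j) := by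
  classical
  have hcard3 : Fintype.card {e : M.E // e ≠ e₁ ∧ e ≠ e₂ ∧ e ≠ e₃} =
      Fintype.card M.E - 3 := card_ne_three e₁ e₂ e₃ h12 h13 h23
  have hle : 3 ≤ Fintype.card M.E := by
    have h : ({e₁, e₂, e₃} : Finset M.E).card = 3 := by
      rw [Finset.card_insert_of_notMem (by simp [h12, h13]),
        Finset.card_insert_of_notMem (by simp [h23]), Finset.card_singleton]
    calc 3 = ({e₁, e₂, e₃} : Finset M.E).card := h.symm
      _ ≤ Fintype.card M.E := Finset.card_le_univ _
  have hcardsum : Fintype.card ({e : M.E // e ≠ e₁ ∧ e ≠ e₂ ∧ e ≠ e₃} ⊕ Unit) =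
      Fintype.card M.E - 2 := by
    rw [Fintype.card_sum, hcard3, Fintype.card_unit]
    omega
  have hsum : (∑ c : M.E → Bool, if c e₁ = c e₂ ∧ c e₂ = c e₃ then
        pInd ((M.ccGraph c T).Reachable (u, false) (v, j)) else 0) =
      ∑ γ : ({e : M.E // e ≠ e₁ ∧ e ≠ e₂ ∧ e ≠ e₃} ⊕ Unit) → Bool,
        pInd ((M.ccGraph (triColor M e₁ e₂ e₃ γ) T).Reachable (u, false) (v, j)) := by
    rw [← Finset.sum_filter]
    have hji : ∀ c : M.E → Bool, (c e₁ = c e₂ ∧ c e₂ = c e₃) →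
        triColor M e₁ e₂ e₃ (fun s => Sum.rec (fun e₀ => c e₀.1) (fun _ => c e₁) s) = c := by
      intro c hc
      funext e
      rw [triColor]
      by_cases h : e = e₁ ∨ e = e₂ ∨ e = e₃
      · rw [dif_pos h]
        rcases h with h | h | h
        · rw [h]
        · rw [h]; exact hc.1
        · rw [h]; exact hc.1.trans hc.2
      · rw [dif_neg h]
    refine Finset.sum_nbij'
      (i := fun c => fun s => Sum.rec (fun e₀ => c e₀.1) (fun _ => c e₁) s)
      (j := triColor M e₁ e₂ e₃) ?_ ?_ ?_ ?_ ?_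
    · intro c _; exact Finset.mem_univ _
    · intro γ _
      simp only [Finset.mem_filter, Finset.mem_univ, true_and]
      have v1 : triColor M e₁ e₂ e₃ γ e₁ = γ (Sum.inr ()) := dif_pos (Or.inl rfl)
      have v2 : triColor M e₁ e₂ e₃ γ e₂ = γ (Sum.inr ()) := dif_pos (Or.inr (Or.inl rfl))
      have v3 : triColor M e₁ e₂ e₃ γ e₃ = γ (Sum.inr ()) := dif_pos (Or.inr (Or.inr rfl))
      rw [v1, v2, v3]
      exact ⟨rfl, rfl⟩
    · intro c hc
      simp only [Finset.mem_filter, Finset.mem_univ, true_and] at hc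
      exact hji c hc
    · intro γ _
      funext s
      rcases s with e₀ | u'
      · have h : ¬ (e₀.1 = e₁ ∨ e₀.1 = e₂ ∨ e₀.1 = e₃) := by
          push_neg
          exact e₀.2
        show triColor M e₁ e₂ e₃ γ e₀.1 = _
        rw [triColor, dif_neg h]
      · show triColor M e₁ e₂ e₃ γ e₁ = _
        rw [triColor, dif_pos (Or.inl rfl)]
    · intro c hc
      simp only [Finset.mem_filter, Finset.mem_univ, true_and] at hc
      rw [hji c hc]
  rw [hsum, PE4tri, hcardsum]

set_option maxHeartbeats 1000000 in
/-- Δ-operation: for a triangle on `x, y, z` with edges `e₁ = xy`, `e₂ = xz`,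
`e₃ = yz`, conditioning on which of the four color patterns occurs reduces the E₃
connection probabilities of `G` to those of the contractions `G₁ = G/xy`,
`G₂ = G/xz`, `G₃ = G/yz` (each with one of the resulting parallel edges removed) and
of the hypergraph model `G₄` where the three triangle edges share one uniform color;
in particular `P_G = (P_{G₁} + P_{G₂} + P_{G₃} + P_{G₄})/4`. -/
theorem PE3M_triangle_operation [DecidableEq V] (M : Multigraph V) (T : Set V)
    (x y z : V) (hxy : x ≠ y) (hxz : x ≠ z) (hyz : y ≠ z)
    (e₁ e₂ e₃ : M.E) (h12 : e₁ ≠ e₂) (h13 : e₁ ≠ e₃) (h23 : e₂ ≠ e₃)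
    (hends₁ : M.ends e₁ = s(x, y)) (hends₂ : M.ends e₂ = s(x, z))
    (hends₃ : M.ends e₃ = s(y, z))
    (u v : V) (j : Bool) :
    ((∑ c : M.E → Bool,
        if c e₁ ≠ c e₂ ∧ c e₂ = c e₃ then
          pInd ((M.ccGraph c T).Reachable (u, false) (v, j)) else 0) /
      2 ^ (Fintype.card M.E - 2) =
      PE3M ((M.contract x y).restrict (fun e => e.1 ≠ e₂))
        ((fun w => if w = x then y else w) '' T)
        ((fun w => if w = x then y else w) u, false)
        ((fun w => if w = x then y else w) v, j)) ∧
    ((∑ c : M.E → Bool,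
        if c e₂ ≠ c e₁ ∧ c e₁ = c e₃ then
          pInd ((M.ccGraph c T).Reachable (u, false) (v, j)) else 0) /
      2 ^ (Fintype.card M.E - 2) =
      PE3M ((M.contract x z).restrict (fun e => e.1 ≠ e₁))
        ((fun w => if w = x then z else w) '' T)
        ((fun w => if w = x then z else w) u, false)
        ((fun w => if w = x then z else w) v, j)) ∧
    ((∑ c : M.E → Bool,
        if c e₃ ≠ c e₁ ∧ c e₁ = c e₂ then
          pInd ((M.ccGraph c T).Reachable (u, false) (v, j)) else 0) /
      2 ^ (Fintype.card M.E - 2) =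
      PE3M ((M.contract y z).restrict (fun e => e.1 ≠ e₁))
        ((fun w => if w = y then z else w) '' T)
        ((fun w => if w = y then z else w) u, false)
        ((fun w => if w = y then z else w) v, j)) ∧
    ((∑ c : M.E → Bool,
        if c e₁ = c e₂ ∧ c e₂ = c e₃ then
          pInd ((M.ccGraph c T).Reachable (u, false) (v, j)) else 0) /
      2 ^ (Fintype.card M.E - 2) =
      PE4tri M e₁ e₂ e₃ T (u, false) (v, j)) ∧
    (PE3M M T (u, false) (v, j) =
      (PE3M ((M.contract x y).restrict (fun e => e.1 ≠ e₂))
          ((fun w => if w = x then y else w) '' T)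
          ((fun w => if w = x then y else w) u, false)
          ((fun w => if w = x then y else w) v, j) +
        PE3M ((M.contract x z).restrict (fun e => e.1 ≠ e₁))
          ((fun w => if w = x then z else w) '' T)
          ((fun w => if w = x then z else w) u, false)
          ((fun w => if w = x then z else w) v, j) +
        PE3M ((M.contract y z).restrict (fun e => e.1 ≠ e₁))
          ((fun w => if w = y then z else w) '' T)
          ((fun w => if w = y then z else w) u, false)
          ((fun w => if w = y then z else w) v, j) +
        PE4tri M e₁ e₂ e₃ T (u, false) (v, j)) / 4) := by
  have P1 := case_eq M T (p := x) (q := y) (w := z) hxy hxz hyz e₁ e₂ e₃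
    hends₁ hends₂ hends₃ u v j
  have P2 := case_eq M T (p := x) (q := z) (w := y) hxz hxy hyz.symm e₂ e₁ e₃
    hends₂ hends₁ (by rw [hends₃, Sym2.eq_swap]) u v j
  have P3 := case_eq M T (p := y) (q := z) (w := x) hyz hxy.symm hxz.symm e₃ e₁ e₂
    hends₃ (by rw [hends₁, Sym2.eq_swap]) (by rw [hends₂, Sym2.eq_swap]) u v j
  have P4 := a4_eq M T e₁ e₂ e₃ h12 h13 h23 u v j
  refine ⟨P1, P2, P3, P4, ?_⟩
  have hle : 3 ≤ Fintype.card M.E := by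
    have h : ({e₁, e₂, e₃} : Finset M.E).card = 3 := by
      rw [Finset.card_insert_of_notMem (by simp [h12, h13]),
        Finset.card_insert_of_notMem (by simp [h23]), Finset.card_singleton]
    calc 3 = ({e₁, e₂, e₃} : Finset M.E).card := h.symm
      _ ≤ Fintype.card M.E := Finset.card_le_univ _
  have hpt : ∀ c : M.E → Bool,
      pInd ((M.ccGraph c T).Reachable (u, false) (v, j)) =
      (if c e₁ ≠ c e₂ ∧ c e₂ = c e₃ then
          pInd ((M.ccGraph c T).Reachable (u, false) (v, j)) else 0) +
      (if c e₂ ≠ c e₁ ∧ c e₁ = c e₃ then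
          pInd ((M.ccGraph c T).Reachable (u, false) (v, j)) else 0) +
      (if c e₃ ≠ c e₁ ∧ c e₁ = c e₂ then
          pInd ((M.ccGraph c T).Reachable (u, false) (v, j)) else 0) +
      (if c e₁ = c e₂ ∧ c e₂ = c e₃ then
          pInd ((M.ccGraph c T).Reachable (u, false) (v, j)) else 0) := by
    intro c
    cases h1 : c e₁ <;> cases h2 : c e₂ <;> cases h3 : c e₃ <;> simp [h1, h2, h3]
  have hsplit : (∑ c : M.E → Bool,
      pInd ((M.ccGraph c T).Reachable (u, false) (v, j))) =
      (∑ c : M.E → Bool, if c e₁ ≠ c e₂ ∧ c e₂ = c e₃ then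
          pInd ((M.ccGraph c T).Reachable (u, false) (v, j)) else 0) +
      (∑ c : M.E → Bool, if c e₂ ≠ c e₁ ∧ c e₁ = c e₃ then
          pInd ((M.ccGraph c T).Reachable (u, false) (v, j)) else 0) +
      (∑ c : M.E → Bool, if c e₃ ≠ c e₁ ∧ c e₁ = c e₂ then
          pInd ((M.ccGraph c T).Reachable (u, false) (v, j)) else 0) +
      (∑ c : M.E → Bool, if c e₁ = c e₂ ∧ c e₂ = c e₃ then
          pInd ((M.ccGraph c T).Reachable (u, false) (v, j)) else 0) := by
    rw [← Finset.sum_add_distrib, ← Finset.sum_add_distrib, ← Finset.sum_add_distrib]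
    exact Finset.sum_congr rfl (fun c _ => hpt c)
  have hpow_ne : ((2 : ℝ) ^ (Fintype.card M.E - 2)) ≠ 0 := by positivity
  have hS1 := (div_eq_iff hpow_ne).mp P1
  have hS2 := (div_eq_iff hpow_ne).mp P2
  have hS3 := (div_eq_iff hpow_ne).mp P3
  have hS4 := (div_eq_iff hpow_ne).mp P4
  rw [PE3M, hsplit, hS1, hS2, hS3, hS4]
  have hpow : (2 : ℝ) ^ Fintype.card M.E = 4 * 2 ^ (Fintype.card M.E - 2) := by
    have h : Fintype.card M.E = (Fintype.card M.E - 2) + 2 := by omega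
    calc (2 : ℝ) ^ Fintype.card M.E = 2 ^ ((Fintype.card M.E - 2) + 2) := by rw [← h]
      _ = 2 ^ (Fintype.card M.E - 2) * 2 ^ 2 := pow_add 2 _ 2
      _ = 4 * 2 ^ (Fintype.card M.E - 2) := by ring
  rw [hpow, ← add_mul, ← add_mul, ← add_mul,
    mul_div_mul_right _ _ hpow_ne]


end
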